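/- Let π : G → Q be a surjective group homomorphism whose kernel is contained in the center of G (a central extension). Then π is commutativity preserving (i.e. for all q₁, q₂ ∈ Q with ⁅q₁,q₂⁆ = 1 there exist g₁, g₂ ∈ G with π(g₁) = q₁, π(g₂) = q₂ and ⁅g₁,g₂⁆ = 1) if and only if ker π ∩ K(G) = {1}, i.e. the only commutator ⁅x,y⁆ of elements of G lying in ker π is the identity. -/

import Mathlib

open scoped commutatorElement

private lemma comm_central_aux {G : Type*} [Group G] {g x : G}
    (h : g⁻¹ * x ∈ Subgroup.center G) (y : G) : ⁅x, y⁆ = ⁅g, y⁆ := by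
  have hc := (Subgroup.mem_center_iff.mp h)
  have hx : x = g * (g⁻¹ * x) := by group
  rw [hx]
  simp only [commutatorElement_def]
  have h1 : (g⁻¹ * x) * y = y * (g⁻¹ * x) := (hc y).symm
  have h2 : (g⁻¹ * x) * y⁻¹ = y⁻¹ * (g⁻¹ * x) := (hc y⁻¹).symm
  calc g * (g⁻¹ * x) * y * (g * (g⁻¹ * x))⁻¹ * y⁻¹
      = g * ((g⁻¹ * x) * y) * (g⁻¹ * x)⁻¹ * g⁻¹ * y⁻¹ := by group
    _ = g * (y * (g⁻¹ * x)) * (g⁻¹ * x)⁻¹ * g⁻¹ * y⁻¹ := by rw [h1]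
    _ = g * y * g⁻¹ * y⁻¹ := by group

/-- a central extension `π : G ↠ Q` (i.e. `ker π ≤ Z(G)`) is commutativity
preserving if and only if the only commutator of elements of `G` lying in `ker π` is the
identity, i.e. `ker π ∩ K(G) = 1`. -/
theorem stmt13 {G Q : Type*} [Group G] [Group Q] (π : G →* Q)
    (hπ : Function.Surjective π) (hcentral : π.ker ≤ Subgroup.center G) :
    (∀ q₁ q₂ : Q, ⁅q₁, q₂⁆ = 1 →
        ∃ g₁ g₂ : G, π g₁ = q₁ ∧ π g₂ = q₂ ∧ ⁅g₁, g₂⁆ = 1) ↔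
      ∀ x y : G, ⁅x, y⁆ ∈ π.ker → ⁅x, y⁆ = 1 := by
  constructor
  · intro hcp x y hk
    have hq : ⁅π x, π y⁆ = 1 := by
      rw [← map_commutatorElement]; exact hk
    obtain ⟨g₁, g₂, hg₁, hg₂, hcomm⟩ := hcp (π x) (π y) hq
    have h1 : g₁⁻¹ * x ∈ Subgroup.center G :=
      hcentral (by simp [MonoidHom.mem_ker, hg₁])
    have h2 : g₂⁻¹ * y ∈ Subgroup.center G :=
      hcentral (by simp [MonoidHom.mem_ker, hg₂])
    have e1 : ⁅x, y⁆ = ⁅g₁, y⁆ := comm_central_aux h1 y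
    have e2 : ⁅g₁, y⁆ = ⁅y, g₁⁆⁻¹ := by group
    have e3 : ⁅y, g₁⁆ = ⁅g₂, g₁⁆ := comm_central_aux h2 g₁
    have e4 : ⁅g₂, g₁⁆ = ⁅g₁, g₂⁆⁻¹ := by group
    rw [e1, e2, e3, e4, hcomm]; simp
  · intro h q₁ q₂ hq
    obtain ⟨g₁, hg₁⟩ := hπ q₁
    obtain ⟨g₂, hg₂⟩ := hπ q₂
    refine ⟨g₁, g₂, hg₁, hg₂, h g₁ g₂ ?_⟩
    rw [MonoidHom.mem_ker, map_commutatorElement, hg₁, hg₂, hq]
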